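/- In the independent cascade model on an arbitrary finite directed influence graph, the marginal gain function is adaptively submodular: for any partial realisations ψ ⊆ ψ' and any node i ∉ R(ψ'), E_L[f(ψ' ∪ {(i, R({i},L))}) - f(ψ') | ψ' ⊆ φ_L] ≤ E_L[f(ψ ∪ {(i, R({i},L))}) - f(ψ) | ψ ⊆ φ_L]. -/

import Mathlib

open Finset

/-- Probability of a live-edge graph `L` (a set of directed edges over the
finite vertex type `V`), where each potential edge `e` is included
independently with probability `p e`. -/
noncomputable def liveProb {V : Type*} [Fintype V] [DecidableEq V]
    (p : V × V → ℝ) (L : Finset (V × V)) : ℝ :=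
  (∏ e ∈ L, p e) * ∏ e ∈ Lᶜ, (1 - p e)

/-- Nodes reached from the seed set `S` in the live-edge graph `L`. -/
noncomputable def reachSet {V : Type*} [Fintype V] [DecidableEq V]
    (L : Finset (V × V)) (S : Finset V) : Finset V := by
  classical
  exact Finset.univ.filter fun v =>
    ∃ u ∈ S, Relation.ReflTransGen (fun a b => (a, b) ∈ L) u v

/-- The live-edge graph `L` is compatible with the partial realisation with
domain `T` and realisation map `ψ` (i.e. `ψ ⊆ φ_L`). -/
def compatible {V : Type*} [Fintype V] [DecidableEq V]
    (ψ : V → Finset V) (T : Finset V) (L : Finset (V × V)) : Prop :=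
  ∀ v ∈ T, ψ v = reachSet L {v}

noncomputable instance {V : Type*} [Fintype V] [DecidableEq V]
    (ψ : V → Finset V) (T : Finset V) :
    DecidablePred (compatible ψ T) := fun L => by
  unfold compatible; infer_instance

namespace Stmt11Aux

set_option linter.unusedSectionVars false

variable {V : Type*} [Fintype V] [DecidableEq V]

/-! ### Probability factorisation machinery -/

noncomputable def wIn (p : V × V → ℝ) (F K : Finset (V × V)) : ℝ :=
  (∏ e ∈ K, p e) * ∏ e ∈ F \ K, (1 - p e)

lemma sum_wIn (p : V × V → ℝ) (F : Finset (V × V)) :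
    ∑ K ∈ F.powerset, wIn p F K = 1 := by
  unfold wIn
  rw [← Finset.prod_add]
  simp

lemma liveProb_nonneg (p : V × V → ℝ) (hp : ∀ e, 0 ≤ p e ∧ p e ≤ 1)
    (L : Finset (V × V)) : 0 ≤ liveProb p L := by
  apply mul_nonneg
  · exact Finset.prod_nonneg fun e _ => (hp e).1
  · exact Finset.prod_nonneg fun e _ => by linarith [(hp e).2]

lemma liveProb_eq (p : V × V → ℝ) (F L : Finset (V × V)) :
    liveProb p L = wIn p F (L ∩ F) * wIn p Fᶜ (L \ F) := by
  unfold liveProb wIn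
  have h1 : (L ∩ F) ∪ (L \ F) = L := by ext e; simp; try tauto
  have hd1 : Disjoint (L ∩ F) (L \ F) := by
    rw [Finset.disjoint_left]; intro e he1 he2
    exact (Finset.mem_sdiff.mp he2).2 (Finset.mem_inter.mp he1).2
  have h2 : F \ (L ∩ F) = F \ L := by ext e; simp; try tauto
  have h3 : Fᶜ \ (L \ F) = Fᶜ \ L := by ext e; simp [Finset.mem_compl]; try tauto
  have h4 : Lᶜ = (F \ L) ∪ (Fᶜ \ L) := by ext e; simp [Finset.mem_compl]; try tauto
  have hd2 : Disjoint (F \ L) (Fᶜ \ L) := by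
    rw [Finset.disjoint_left]; intro e he1 he2
    exact (Finset.mem_compl.mp (Finset.mem_sdiff.mp he2).1) (Finset.mem_sdiff.mp he1).1
  have p1 : ∏ e ∈ L, p e = (∏ e ∈ L ∩ F, p e) * ∏ e ∈ L \ F, p e := by
    rw [← Finset.prod_union hd1, h1]
  have p2 : ∏ e ∈ Lᶜ, (1 - p e) =
      (∏ e ∈ F \ (L ∩ F), (1 - p e)) * ∏ e ∈ Fᶜ \ (L \ F), (1 - p e) := by
    rw [h2, h3, h4, Finset.prod_union hd2]
  rw [p1, p2]; ring

lemma inter_eq (F K1 K2 : Finset (V × V)) (h1 : K1 ⊆ F) (h2 : K2 ⊆ Fᶜ) :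
    (K1 ∪ K2) ∩ F = K1 := by
  ext e; simp only [Finset.mem_inter, Finset.mem_union]
  constructor
  · rintro ⟨h3 | h3, h4⟩
    · exact h3
    · exact absurd h4 (Finset.mem_compl.mp (h2 h3))
  · intro h3; exact ⟨Or.inl h3, h1 h3⟩

lemma sdiff_eq (F K1 K2 : Finset (V × V)) (h1 : K1 ⊆ F) (h2 : K2 ⊆ Fᶜ) :
    (K1 ∪ K2) \ F = K2 := by
  ext e; simp only [Finset.mem_sdiff, Finset.mem_union]
  constructor
  · rintro ⟨h3 | h3, h4⟩
    · exact absurd (h1 h3) h4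
    · exact h3
  · intro h3; exact ⟨Or.inr h3, Finset.mem_compl.mp (h2 h3)⟩

lemma sum_univ_eq_sum_pairs (F : Finset (V × V)) (h : Finset (V × V) → ℝ) :
    ∑ L : Finset (V × V), h L
      = ∑ K ∈ F.powerset ×ˢ Fᶜ.powerset, h (K.1 ∪ K.2) := by
  apply Finset.sum_nbij' (i := fun L => (L ∩ F, L \ F)) (j := fun K => K.1 ∪ K.2)
  · intro L _
    simp only [Finset.mem_product, Finset.mem_powerset]
    constructor
    · exact Finset.inter_subset_right
    · intro e he; simp only [Finset.mem_compl]; exact (Finset.mem_sdiff.mp he).2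
  · intro K _; exact Finset.mem_univ _
  · intro L _; ext e; simp; try tauto
  · intro K hK
    simp only [Finset.mem_product, Finset.mem_powerset] at hK
    exact Prod.ext (inter_eq F K.1 K.2 hK.1 hK.2) (sdiff_eq F K.1 K.2 hK.1 hK.2)
  · intro L _; congr 1; ext e; simp; try tauto

lemma factor_core (p : V × V → ℝ) (F : Finset (V × V)) (c : Finset (V × V) → Prop)
    [DecidablePred c]
    (hc : ∀ K1 ∈ F.powerset, ∀ K2 ∈ Fᶜ.powerset, (c (K1 ∪ K2) ↔ c K1))
    (g : Finset (V × V) → ℝ)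
    (hg : ∀ K1 ∈ F.powerset, ∀ K2 ∈ Fᶜ.powerset, g (K1 ∪ K2) = g K2) :
    ∑ L ∈ Finset.univ.filter c, liveProb p L * g L
      = (∑ K1 ∈ F.powerset, if c K1 then wIn p F K1 else 0) *
        (∑ K2 ∈ Fᶜ.powerset, wIn p Fᶜ K2 * g K2) := by
  classical
  rw [Finset.sum_filter, sum_univ_eq_sum_pairs F, Finset.sum_product,
    Finset.sum_mul_sum]
  refine Finset.sum_congr rfl fun K1 hK1 => Finset.sum_congr rfl fun K2 hK2 => ?_
  have hK1' := Finset.mem_powerset.mp hK1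
  have hK2' := Finset.mem_powerset.mp hK2
  have hlp : liveProb p (K1 ∪ K2) = wIn p F K1 * wIn p Fᶜ K2 := by
    rw [liveProb_eq p F (K1 ∪ K2), inter_eq F K1 K2 hK1' hK2',
      sdiff_eq F K1 K2 hK1' hK2']
  by_cases h : c K1
  · rw [if_pos ((hc K1 hK1 K2 hK2).mpr h), if_pos h, hlp, hg K1 hK1 K2 hK2]; ring
  · rw [if_neg (fun hh => h ((hc K1 hK1 K2 hK2).mp hh)), if_neg h, zero_mul]

lemma factor (p : V × V → ℝ) (F : Finset (V × V)) (c : Finset (V × V) → Prop)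
    [DecidablePred c]
    (hc : ∀ K1 ∈ F.powerset, ∀ K2 ∈ Fᶜ.powerset, (c (K1 ∪ K2) ↔ c K1))
    (g : Finset (V × V) → ℝ)
    (hg : ∀ K1 ∈ F.powerset, ∀ K2 ∈ Fᶜ.powerset, g (K1 ∪ K2) = g K2) :
    ∑ L ∈ Finset.univ.filter c, liveProb p L * g L
      = (∑ L ∈ Finset.univ.filter c, liveProb p L) *
        (∑ L : Finset (V × V), liveProb p L * g L) := by
  classical
  have h1 := factor_core p F c hc g hg
  have h2 := factor_core p F c hc (fun _ => 1) (fun _ _ _ _ => rfl)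
  have h3 := factor_core p F (fun _ => True) (fun _ _ _ _ => Iff.rfl) g hg
  simp only [mul_one, if_true] at h2 h3
  rw [Finset.filter_true] at h3
  rw [sum_wIn] at h3
  rw [sum_wIn] at h2
  rw [h1, h2, h3]; ring

/-! ### Graph reachability lemmas -/

/-- Nodes reachable from `i` by a path avoiding `B` entirely. -/
noncomputable def reachAvoid (L : Finset (V × V)) (B : Finset V) (i : V) : Finset V := by
  classical
  exact Finset.univ.filter fun v =>
    Relation.ReflTransGen (fun a b => (a, b) ∈ L ∧ a ∉ B ∧ b ∉ B) i v ∧ v ∉ B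

lemma mem_reachAvoid {L : Finset (V × V)} {B : Finset V} {i v : V} :
    v ∈ reachAvoid L B i ↔
      Relation.ReflTransGen (fun a b => (a, b) ∈ L ∧ a ∉ B ∧ b ∉ B) i v ∧ v ∉ B := by
  classical
  simp [reachAvoid]

lemma mem_reachSet_singleton {L : Finset (V × V)} {u v : V} :
    v ∈ reachSet L {u} ↔ Relation.ReflTransGen (fun a b => (a, b) ∈ L) u v := by
  classical
  simp [reachSet]

/-- Under compatibility, edges leaving the observed region stay in it. -/
lemma closed_of_compat {ψ : V → Finset V} {S' : Finset V} {L : Finset (V × V)}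
    (h : compatible ψ S' L) :
    ∀ a b, (a, b) ∈ L → a ∈ S'.biUnion ψ → b ∈ S'.biUnion ψ := by
  intro a b hab ha
  rw [Finset.mem_biUnion] at ha ⊢
  obtain ⟨v, hv, hav⟩ := ha
  refine ⟨v, hv, ?_⟩
  rw [h v hv] at hav ⊢
  rw [mem_reachSet_singleton] at hav ⊢
  exact hav.tail hab

lemma reach_sdiff_eq {L : Finset (V × V)} {B : Finset V} {i : V}
    (hclosed : ∀ a b, (a, b) ∈ L → a ∈ B → b ∈ B) :
    reachSet L {i} \ B = reachAvoid L B i := by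
  ext v
  rw [Finset.mem_sdiff, mem_reachSet_singleton, mem_reachAvoid]
  constructor
  · rintro ⟨hr, hv⟩
    refine ⟨?_, hv⟩
    revert hv
    induction hr with
    | refl => intro _; exact Relation.ReflTransGen.refl
    | @tail b c h1 h2 ih =>
      intro hv
      have ha : b ∉ B := fun hmem => hv (hclosed _ _ h2 hmem)
      exact (ih ha).tail ⟨h2, ha, hv⟩
  · rintro ⟨hr, hv⟩
    refine ⟨?_, hv⟩
    exact Relation.ReflTransGen.mono (fun a b hab => hab.1) _ _ hr

/-- The edge set consisting of edges whose source lies in `B`. -/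
noncomputable def srcIn (B : Finset V) : Finset (V × V) := by
  classical
  exact Finset.univ.filter fun e => e.1 ∈ B

lemma mem_srcIn {B : Finset V} {e : V × V} : e ∈ srcIn B ↔ e.1 ∈ B := by
  classical
  simp [srcIn]

/-- Compatibility only depends on the edges whose source lies in the observed
region. -/
lemma compat_iff_inter (ψ : V → Finset V) (S' : Finset V) (L : Finset (V × V)) :
    compatible ψ S' L ↔ compatible ψ S' (L ∩ srcIn (S'.biUnion ψ)) := by
  set B := S'.biUnion ψ with hB
  constructor
  · intro h v hv
    have hψ := h v hv
    have hψB : ψ v ⊆ B := Finset.subset_biUnion_of_mem ψ hv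
    apply Finset.Subset.antisymm
    · intro w hw
      rw [hψ, mem_reachSet_singleton] at hw
      rw [mem_reachSet_singleton]
      induction hw with
      | refl => exact Relation.ReflTransGen.refl
      | @tail b c h1 h2 ih =>
        have hbB : b ∈ B := by
          apply hψB
          rw [hψ, mem_reachSet_singleton]
          exact Relation.ReflTransGen.mono (fun a b hab => (Finset.mem_inter.mp hab).1) _ _ ih
        exact ih.tail (Finset.mem_inter.mpr ⟨h2, mem_srcIn.mpr hbB⟩)
    · intro w hw
      rw [mem_reachSet_singleton] at hw
      rw [hψ, mem_reachSet_singleton]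
      exact Relation.ReflTransGen.mono (fun a b hab => (Finset.mem_inter.mp hab).1) _ _ hw
  · intro h v hv
    have hψ := h v hv
    have hψB : ψ v ⊆ B := Finset.subset_biUnion_of_mem ψ hv
    apply Finset.Subset.antisymm
    · intro w hw
      rw [hψ, mem_reachSet_singleton] at hw
      rw [mem_reachSet_singleton]
      exact Relation.ReflTransGen.mono (fun a b hab => (Finset.mem_inter.mp hab).1) _ _ hw
    · intro w hw
      rw [mem_reachSet_singleton] at hw
      induction hw with
      | refl =>
        rw [hψ, mem_reachSet_singleton]
      | @tail b c h1 h2 ih =>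
        have hbB : b ∈ B := hψB ih
        rw [hψ, mem_reachSet_singleton] at ih ⊢
        exact ih.tail (Finset.mem_inter.mpr ⟨h2, mem_srcIn.mpr hbB⟩)

/-- The avoiding reach only depends on the edges whose source lies outside
`B`. -/
lemma reachAvoid_sdiff (L : Finset (V × V)) (B : Finset V) (i : V) :
    reachAvoid L B i = reachAvoid (L \ srcIn B) B i := by
  ext v
  rw [mem_reachAvoid, mem_reachAvoid]
  constructor
  · rintro ⟨hr, hv⟩
    refine ⟨Relation.ReflTransGen.mono (fun a b hab => ⟨?_, hab.2.1, hab.2.2⟩) _ _ hr, hv⟩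
    rw [Finset.mem_sdiff, mem_srcIn]
    exact ⟨hab.1, hab.2.1⟩
  · rintro ⟨hr, hv⟩
    exact ⟨Relation.ReflTransGen.mono (fun a b hab => ⟨(Finset.mem_sdiff.mp hab.1).1, hab.2.1, hab.2.2⟩) _ _ hr, hv⟩

lemma reachAvoid_anti {L : Finset (V × V)} {B B' : Finset V} {i : V}
    (hBB : B ⊆ B') : reachAvoid L B' i ⊆ reachAvoid L B i := by
  intro v hv
  rw [mem_reachAvoid] at hv ⊢
  refine ⟨Relation.ReflTransGen.mono (fun a b hab => ⟨hab.1, fun h => hab.2.1 (hBB h),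
    fun h => hab.2.2 (hBB h)⟩) _ _ hv.1, fun h => hv.2 (hBB h)⟩

/-- Under compatibility the marginal gain equals the size of the avoiding
reach. -/
lemma gain_eq {ψ : V → Finset V} {S' : Finset V} {L : Finset (V × V)} {i : V}
    (h : compatible ψ S' L) (hi : i ∉ S'.biUnion ψ) :
    (((S'.biUnion ψ) ∪ reachSet L {i}).card : ℝ) - ((S'.biUnion ψ).card : ℝ)
      = ((reachAvoid L (S'.biUnion ψ) i).card : ℝ) := by
  set B := S'.biUnion ψ with hB
  have h1 : B ∪ reachSet L {i} = B ∪ (reachSet L {i} \ B) :=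
    (Finset.union_sdiff_self_eq_union).symm
  have h2 : Disjoint B (reachSet L {i} \ B) := Finset.disjoint_sdiff
  rw [h1, Finset.card_union_of_disjoint h2,
    reach_sdiff_eq (closed_of_compat h)]
  push_cast
  ring

/-- Conditional expectation of the marginal gain equals the unconditional
expectation of the avoiding reach size. -/
lemma cond_exp_eq (p : V × V → ℝ) (ψ : V → Finset V) (S' : Finset V) (i : V)
    (hi : i ∉ S'.biUnion ψ)
    (hpos : 0 < ∑ L ∈ Finset.univ.filter (fun L => compatible ψ S' L), liveProb p L) :
    (∑ L ∈ Finset.univ.filter (fun L => compatible ψ S' L), liveProb p L *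
        ((((S'.biUnion ψ) ∪ reachSet L {i}).card : ℝ) - ((S'.biUnion ψ).card : ℝ))) /
      (∑ L ∈ Finset.univ.filter (fun L => compatible ψ S' L), liveProb p L)
    = ∑ L : Finset (V × V),
        liveProb p L * ((reachAvoid L (S'.biUnion ψ) i).card : ℝ) := by
  classical
  set B := S'.biUnion ψ with hB
  set F := srcIn B with hF
  have hFc : ∀ K2 : Finset (V × V), K2 ⊆ Fᶜ → K2 \ F = K2 := by
    intro K2 h2
    ext e
    rw [Finset.mem_sdiff]
    exact ⟨fun h => h.1, fun h => ⟨h, Finset.mem_compl.mp (h2 h)⟩⟩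
  have hnum : ∑ L ∈ Finset.univ.filter (fun L => compatible ψ S' L), liveProb p L *
        ((((B : Finset V) ∪ reachSet L {i}).card : ℝ) - ((B : Finset V).card : ℝ))
      = ∑ L ∈ Finset.univ.filter (fun L => compatible ψ S' L), liveProb p L *
        ((reachAvoid L B i).card : ℝ) := by
    refine Finset.sum_congr rfl fun L hL => ?_
    rw [gain_eq (Finset.mem_filter.mp hL).2 hi]
  rw [hnum]
  have hfac := factor p F (fun L => compatible ψ S' L)
    (fun K1 hK1 K2 hK2 => by
      show compatible ψ S' (K1 ∪ K2) ↔ compatible ψ S' K1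
      have hK1' := Finset.mem_powerset.mp hK1
      have hK2' := Finset.mem_powerset.mp hK2
      rw [compat_iff_inter ψ S' (K1 ∪ K2), compat_iff_inter ψ S' K1]
      rw [← hB, ← hF, inter_eq F K1 K2 hK1' hK2',
        Finset.inter_eq_left.mpr hK1'])
    (fun L => ((reachAvoid L B i).card : ℝ))
    (fun K1 hK1 K2 hK2 => by
      show ((reachAvoid (K1 ∪ K2) B i).card : ℝ) = ((reachAvoid K2 B i).card : ℝ)
      have hK1' := Finset.mem_powerset.mp hK1
      have hK2' := Finset.mem_powerset.mp hK2
      rw [reachAvoid_sdiff (K1 ∪ K2) B i, ← hF, sdiff_eq F K1 K2 hK1' hK2',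
        reachAvoid_sdiff K2 B i, ← hF, hFc K2 hK2'])
  rw [hfac, mul_div_cancel_left₀ _ (ne_of_gt hpos)]

end Stmt11Aux

/-- Adaptive submodularity of the IC model with full-adoption feedback: the
conditional expected marginal gain of a node `i` not yet reached only decreases
as the observed partial realisation grows (`ψ` restricted to `S ⊆ S'`). -/
theorem stmt_11 {V : Type*} [Fintype V] [DecidableEq V]
    (p : V × V → ℝ) (hp : ∀ e, 0 ≤ p e ∧ p e ≤ 1)
    (ψ : V → Finset V) (S S' : Finset V) (hSS : S ⊆ S')
    (hfeas : ∃ L : Finset (V × V), compatible ψ S' L)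
    (i : V) (hi : i ∉ S'.biUnion ψ)
    (hposS : 0 < ∑ L ∈ Finset.univ.filter (fun L => compatible ψ S L), liveProb p L)
    (hposS' : 0 < ∑ L ∈ Finset.univ.filter (fun L => compatible ψ S' L), liveProb p L) :
    (∑ L ∈ Finset.univ.filter (fun L => compatible ψ S' L), liveProb p L *
        ((((S'.biUnion ψ) ∪ reachSet L {i}).card : ℝ) - ((S'.biUnion ψ).card : ℝ))) /
      (∑ L ∈ Finset.univ.filter (fun L => compatible ψ S' L), liveProb p L)
    ≤
    (∑ L ∈ Finset.univ.filter (fun L => compatible ψ S L), liveProb p L *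
        ((((S.biUnion ψ) ∪ reachSet L {i}).card : ℝ) - ((S.biUnion ψ).card : ℝ))) /
      (∑ L ∈ Finset.univ.filter (fun L => compatible ψ S L), liveProb p L) := by
  classical
  have hBB' : S.biUnion ψ ⊆ S'.biUnion ψ :=
    Finset.biUnion_subset_biUnion_of_subset_left ψ hSS
  have hiS : i ∉ S.biUnion ψ := fun h => hi (hBB' h)
  rw [Stmt11Aux.cond_exp_eq p ψ S' i hi hposS',
    Stmt11Aux.cond_exp_eq p ψ S i hiS hposS]
  apply Finset.sum_le_sum
  intro L _
  apply mul_le_mul_of_nonneg_left _ (Stmt11Aux.liveProb_nonneg p hp L)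
  exact_mod_cast Finset.card_le_card (Stmt11Aux.reachAvoid_anti hBB')
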